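/- Let n ≥ 1 be an integer, t_n = sin(π/(2n)), μ_n = 1 - t_n⁴, G = μ_n · P(π/(2n)) and H = μ_n · R(π/(2n)), where P(φ) = [[1, -tan φ],[0,0]] and R(φ) is rotation by 2φ. Then for any sequence A : ℕ → Matrix (Fin 2) (Fin 2) ℝ with A(k) ∈ {G, H} for all k, and all k ≥ 1, the operator norm ‖A(k) A(k-1) ⋯ A(1)‖ ≤ μ_n^k · ‖P(π/(2n))‖. In particular the products converge to zero exponentially. -/

import Mathlib

open Real Matrix

set_option maxHeartbeats 1000000
set_option synthInstance.maxHeartbeats 200000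

noncomputable def P (φ : ℝ) : Matrix (Fin 2) (Fin 2) ℝ := !![1, -Real.tan φ; 0, 0]

noncomputable def R (φ : ℝ) : Matrix (Fin 2) (Fin 2) ℝ :=
  !![Real.cos (2*φ), -Real.sin (2*φ); Real.sin (2*φ), Real.cos (2*φ)]

noncomputable def opNorm (A : Matrix (Fin 2) (Fin 2) ℝ) : ℝ :=
  ‖Matrix.toEuclideanCLM (𝕜 := ℝ) A‖

/-- `prods A k = A k * A (k-1) * ⋯ * A 1` (with `prods A 0 = 1`). -/
noncomputable def prods (A : ℕ → Matrix (Fin 2) (Fin 2) ℝ) : ℕ → Matrix (Fin 2) (Fin 2) ℝ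
  | 0 => 1
  | k + 1 => A (k + 1) * prods A k

noncomputable def Rot (θ : ℝ) : Matrix (Fin 2) (Fin 2) ℝ := !![cos θ, -sin θ; sin θ, cos θ]

lemma R_eq_Rot (φ : ℝ) : R φ = Rot (2 * φ) := rfl

lemma Rot_mul (θ θ' : ℝ) : Rot θ * Rot θ' = Rot (θ + θ') := by
  ext i j
  fin_cases i <;> fin_cases j <;>
    simp [Rot, Matrix.mul_apply, Fin.sum_univ_two, cos_add, sin_add] <;> ring

lemma Rot_zero : Rot 0 = 1 := by
  ext i j; fin_cases i <;> fin_cases j <;> simp [Rot, Matrix.one_apply]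

lemma P_mul_P (φ : ℝ) : P φ * P φ = P φ := by
  ext i j
  fin_cases i <;> fin_cases j <;> simp [P, Matrix.mul_apply, Fin.sum_univ_two]

lemma P_Rot_P (φ θ : ℝ) : P φ * Rot θ * P φ = (cos θ - Real.tan φ * sin θ) • P φ := by
  ext i j
  fin_cases i <;> fin_cases j <;>
    simp [P, Rot, Matrix.mul_apply, Fin.sum_univ_two] <;> first | tauto | ring

lemma Rot_unitary (θ : ℝ) : Rot θ ∈ unitary (Matrix (Fin 2) (Fin 2) ℝ) := by
  constructor <;>
  · ext i j
    fin_cases i <;> fin_cases j <;>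
      simp [Rot, Matrix.mul_apply, Fin.sum_univ_two, Matrix.one_apply,
        Matrix.star_eq_conjTranspose, Matrix.conjTranspose_apply, Matrix.vecHead,
        Matrix.vecTail] <;> nlinarith [sin_sq_add_cos_sq θ]

lemma opNorm_mul_le (A B : Matrix (Fin 2) (Fin 2) ℝ) :
    opNorm (A * B) ≤ opNorm A * opNorm B := by
  simp only [opNorm, _root_.map_mul]
  exact norm_mul_le (Matrix.toEuclideanCLM (𝕜 := ℝ) A) (Matrix.toEuclideanCLM (𝕜 := ℝ) B)

lemma opNorm_smul (c : ℝ) (A : Matrix (Fin 2) (Fin 2) ℝ) :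
    opNorm (c • A) = |c| * opNorm A := by
  simp only [opNorm, _root_.map_smul]
  rw [show |c| = ‖c‖ from (Real.norm_eq_abs c).symm]
  exact norm_smul c (Matrix.toEuclideanCLM (𝕜 := ℝ) A)

lemma opNorm_Rot (θ : ℝ) : opNorm (Rot θ) = 1 := by
  have h := Rot_unitary θ
  have hu : (Matrix.toEuclideanCLM (𝕜 := ℝ) (Rot θ)) ∈
      unitary (EuclideanSpace ℝ (Fin 2) →L[ℝ] EuclideanSpace ℝ (Fin 2)) := by
    constructor
    · rw [← map_star, ← _root_.map_mul, h.1, _root_.map_one]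
    · rw [← map_star, ← _root_.map_mul, h.2, _root_.map_one]
  exact CStarRing.norm_of_mem_unitary hu

lemma one_le_opNorm_P (φ : ℝ) : 1 ≤ opNorm (P φ) := by
  have hne : P φ ≠ 0 := by
    intro h
    have := congrFun (congrFun h 0) 0
    simp [P] at this
  have hpos : 0 < opNorm (P φ) := by
    rw [opNorm]
    refine norm_pos_iff.mpr ?_
    intro h
    exact hne (by simpa using (Matrix.toEuclideanCLM (𝕜 := ℝ)).injective (h.trans (map_zero _).symm))
  have hle : opNorm (P φ) ≤ opNorm (P φ) * opNorm (P φ) := by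
    conv_lhs => rw [← P_mul_P φ]
    exact opNorm_mul_le _ _
  nlinarith

lemma key_cos (n : ℕ) (hn : 1 ≤ n) (b : ℕ) :
    |cos ((2 * (b:ℝ) + 1) * (π / (2 * n)))| ≤ cos (π / (2 * n)) := by
  have hn0 : (0:ℝ) < n := by exact_mod_cast hn
  set φ : ℝ := π / (2 * n) with hφ
  have hφpos : 0 < φ := by positivity
  have hπ : (2 * (n:ℝ)) * φ = π := by rw [hφ]; field_simp
  set k : ℤ := round ((2 * (b:ℝ) + 1) / (2 * n)) with hk
  have hround : |(2 * (b:ℝ) + 1) / (2 * n) - k| ≤ 1 / 2 := abs_sub_round _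
  set d : ℤ := (2 * (b:ℤ) + 1) - 2 * n * k with hd
  have hd_ne : d ≠ 0 := by
    intro h
    rw [hd] at h
    have h1 : 2 * ((n:ℤ) * k) = 2 * (b:ℤ) + 1 := by linarith
    generalize (n:ℤ) * k = m at h1
    omega
  have hdiffeq : (2 * (b:ℝ) + 1) / (2 * n) - k = ((2 * (b:ℝ) + 1) - 2 * n * k) / (2 * n) := by
    field_simp
  have hd_abs : (|d| : ℝ) ≤ n := by
    rw [hdiffeq, abs_div, abs_of_pos (show (0:ℝ) < 2*n by positivity),
      div_le_iff₀ (show (0:ℝ) < 2*n by positivity)] at hround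
    have : |(2 * (b:ℝ) + 1) - 2 * n * k| ≤ n := by linarith
    calc (|d| : ℝ) = |((d:ℤ):ℝ)| := by push_cast; ring
      _ = |(2 * (b:ℝ) + 1) - 2 * n * k| := by rw [hd]; push_cast; ring_nf
      _ ≤ n := this
  have hd1 : (1:ℝ) ≤ |d| := by exact_mod_cast Int.one_le_abs hd_ne
  have hsplit : (2 * (b:ℝ) + 1) * φ = (d:ℝ) * φ + k * π := by
    rw [← hπ, hd]; push_cast; ring
  rw [hsplit, Real.cos_add_int_mul_pi, abs_mul]
  have h1 : |((-1:ℝ)) ^ k| = 1 := by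
    rcases Int.even_or_odd k with hk2 | hk2
    · rw [hk2.neg_one_zpow]; norm_num
    · rw [hk2.neg_one_zpow]; norm_num
  rw [h1, one_mul]
  have habs : |(d:ℝ) * φ| = (|d|:ℤ) * φ := by
    rw [abs_mul, abs_of_pos hφpos]; push_cast; ring
  have hcos : cos ((d:ℝ) * φ) = cos ((|d|:ℤ) * φ) := by
    rw [← habs, Real.cos_abs]
  have hle : ((|d|:ℤ):ℝ) * φ ≤ π / 2 := by
    have : ((|d|:ℤ):ℝ) * φ ≤ n * φ := by
      apply mul_le_mul_of_nonneg_right _ hφpos.le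
      exact_mod_cast hd_abs
    have h2 : (n:ℝ) * φ = π / 2 := by rw [hφ]; field_simp
    linarith
  rw [hcos, abs_of_nonneg]
  · apply Real.cos_le_cos_of_nonneg_of_le_pi hφpos.le (le_trans hle (by linarith [pi_pos]))
    calc φ = 1 * φ := (one_mul φ).symm
      _ ≤ ((|d|:ℤ):ℝ) * φ := by apply mul_le_mul_of_nonneg_right _ hφpos.le; exact_mod_cast hd1
  · apply Real.cos_nonneg_of_mem_Icc
    constructor
    · have : (0:ℝ) ≤ ((|d|:ℤ):ℝ) * φ := by positivity
      linarith
    · exact hle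

lemma c_bound (n : ℕ) (hn : 1 ≤ n) (b : ℕ) :
    |cos (2 * (π / (2 * n)) * b) - Real.tan (π / (2 * n)) * sin (2 * (π / (2 * n)) * b)| ≤ 1 := by
  rcases eq_or_lt_of_le hn with h1 | h2
  · -- n = 1 : φ = π/2, tan junk value is 0
    have hn1 : (n:ℝ) = 1 := by exact_mod_cast h1.symm
    rw [hn1]
    norm_num [Real.tan_pi_div_two]
    calc |cos (2 * (π / 2) * b)| ≤ 1 := abs_cos_le_one _
      _ = 1 := rfl
  · -- n ≥ 2 : cos φ > 0
    have hn0 : (1:ℝ) < n := by exact_mod_cast h2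
    set φ : ℝ := π / (2 * n) with hφ
    have hφpos : 0 < φ := by positivity
    have hφlt : φ < π / 2 := by
      rw [hφ, div_lt_div_iff₀ (by positivity) (by norm_num)]
      nlinarith [pi_pos]
    have hcosφ : 0 < cos φ := Real.cos_pos_of_mem_Ioo ⟨by linarith, hφlt⟩
    have htan : Real.tan φ = sin φ / cos φ := Real.tan_eq_sin_div_cos φ
    have hkey := key_cos n hn b
    have heq : cos (2 * φ * b) - Real.tan φ * sin (2 * φ * b)
        = cos ((2 * (b:ℝ) + 1) * φ) / cos φ := by
      have h3 : (2 * (b:ℝ) + 1) * φ = 2 * φ * b + φ := by ring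
      rw [htan, h3, Real.cos_add]
      field_simp
    rw [heq, abs_div, abs_of_pos hcosφ, div_le_one hcosφ]
    exact hkey

lemma invariant (n : ℕ) (hn : 1 ≤ n) (μ : ℝ) (A : ℕ → Matrix (Fin 2) (Fin 2) ℝ)
    (hA : ∀ k, A k = μ • P (π / (2 * n)) ∨ A k = μ • Rot (2 * (π / (2 * n)))) :
    ∀ k : ℕ, (∃ b : ℕ, prods A k = μ ^ k • Rot (2 * (π / (2 * n)) * b)) ∨
      (∃ (b b₀ : ℕ) (c : ℝ), |c| ≤ 1 ∧
        prods A k = (μ ^ k * c) •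
          (Rot (2 * (π / (2 * n)) * b) * P (π / (2 * n)) * Rot (2 * (π / (2 * n)) * b₀))) := by
  set φ : ℝ := π / (2 * n) with hφ
  have hzero : Rot (2 * φ * ((0:ℕ):ℝ)) = 1 := by
    rw [show 2 * φ * ((0:ℕ):ℝ) = 0 by push_cast; ring, Rot_zero]
  intro k
  induction k with
  | zero =>
    left
    exact ⟨0, by simp [prods, Rot_zero]⟩
  | succ k ih =>
    have hstep : prods A (k + 1) = A (k + 1) * prods A k := rfl
    rcases hA (k + 1) with hP | hR
    · -- multiply by μ • P φ
      rcases ih with ⟨b, hb⟩ | ⟨b, b₀, c, hc, hb⟩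
      · right
        refine ⟨0, b, 1, by norm_num, ?_⟩
        rw [hstep, hP, hb, smul_mul_assoc, mul_smul_comm, smul_smul, hzero, one_mul]
        rw [show μ * μ ^ k = μ ^ (k+1) * 1 by ring]
      · right
        set cb : ℝ := cos (2 * φ * b) - Real.tan φ * sin (2 * φ * b) with hcb
        refine ⟨0, b₀, c * cb, ?_, ?_⟩
        · calc |c * cb| = |c| * |cb| := abs_mul _ _
            _ ≤ 1 * 1 := mul_le_mul hc (c_bound n hn b) (abs_nonneg _) zero_le_one
            _ = 1 := one_mul 1
        · have hPRP : P φ * (Rot (2 * φ * b) * P φ * Rot (2 * φ * b₀))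
              = cb • (P φ * Rot (2 * φ * b₀)) := by
            rw [← mul_assoc, ← mul_assoc, P_Rot_P, smul_mul_assoc]
          rw [hstep, hP, hb, smul_mul_assoc, mul_smul_comm, smul_smul, hPRP, smul_smul,
            hzero, one_mul]
          rw [show μ * (μ ^ k * c) * cb = μ ^ (k+1) * (c * cb) by ring]
    · -- multiply by μ • Rot (2φ)
      rcases ih with ⟨b, hb⟩ | ⟨b, b₀, c, hc, hb⟩
      · left
        refine ⟨b + 1, ?_⟩
        rw [hstep, hR, hb, smul_mul_assoc, mul_smul_comm, smul_smul, Rot_mul]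
        rw [show 2 * φ + 2 * φ * (b:ℝ) = 2 * φ * (((b+1:ℕ)):ℝ) by push_cast; ring,
          show μ * μ ^ k = μ ^ (k+1) by ring]
      · right
        refine ⟨b + 1, b₀, c, hc, ?_⟩
        have hM : Rot (2 * φ) * (Rot (2 * φ * b) * P φ * Rot (2 * φ * b₀))
            = Rot (2 * φ * ((b+1:ℕ):ℝ)) * P φ * Rot (2 * φ * b₀) := by
          rw [← mul_assoc, ← mul_assoc, Rot_mul,
            show 2 * φ + 2 * φ * (b:ℝ) = 2 * φ * (((b+1:ℕ)):ℝ) by push_cast; ring]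
        rw [hstep, hR, hb, smul_mul_assoc, mul_smul_comm, smul_smul, hM,
          show μ * (μ ^ k * c) = μ ^ (k+1) * c by ring]

lemma opNorm_nonneg (A : Matrix (Fin 2) (Fin 2) ℝ) : 0 ≤ opNorm A := norm_nonneg _

lemma bound_all (n : ℕ) (hn : 1 ≤ n) (μ : ℝ) (hμ0 : 0 ≤ μ)
    (A : ℕ → Matrix (Fin 2) (Fin 2) ℝ)
    (hA : ∀ k, A k = μ • P (π / (2 * n)) ∨ A k = μ • Rot (2 * (π / (2 * n)))) (k : ℕ) :
    opNorm (prods A k) ≤ μ ^ k * opNorm (P (π / (2 * n))) := by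
  set φ : ℝ := π / (2 * n) with hφ
  have hμk : (0:ℝ) ≤ μ ^ k := pow_nonneg hμ0 k
  have hPn : 1 ≤ opNorm (P φ) := one_le_opNorm_P φ
  rcases invariant n hn μ A hA k with ⟨b, hb⟩ | ⟨b, b₀, c, hc, hb⟩
  · rw [hb, opNorm_smul, abs_pow, abs_of_nonneg hμ0, opNorm_Rot, mul_one]
    exact le_mul_of_one_le_right hμk hPn
  · rw [hb, opNorm_smul]
    have h1 : |μ ^ k * c| ≤ μ ^ k := by
      rw [abs_mul, abs_pow, abs_of_nonneg hμ0]
      calc μ ^ k * |c| ≤ μ ^ k * 1 := mul_le_mul_of_nonneg_left hc hμk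
        _ = μ ^ k := mul_one _
    have h2 : opNorm (Rot (2 * φ * b) * P φ * Rot (2 * φ * b₀)) ≤ opNorm (P φ) := by
      calc opNorm (Rot (2 * φ * b) * P φ * Rot (2 * φ * b₀))
          ≤ opNorm (Rot (2 * φ * b) * P φ) * opNorm (Rot (2 * φ * b₀)) := opNorm_mul_le _ _
        _ = opNorm (Rot (2 * φ * b) * P φ) := by rw [opNorm_Rot, mul_one]
        _ ≤ opNorm (Rot (2 * φ * b)) * opNorm (P φ) := opNorm_mul_le _ _
        _ = opNorm (P φ) := by rw [opNorm_Rot, one_mul]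
    calc |μ ^ k * c| * opNorm (Rot (2 * φ * b) * P φ * Rot (2 * φ * b₀))
        ≤ μ ^ k * opNorm (P φ) :=
          mul_le_mul h1 h2 (opNorm_nonneg _) hμk

theorem stmt9 (n : ℕ) (hn : 1 ≤ n) (t μ : ℝ)
    (ht : t = Real.sin (Real.pi / (2 * (n : ℝ)))) (hμ : μ = 1 - t ^ 4)
    (G H : Matrix (Fin 2) (Fin 2) ℝ)
    (hG : G = μ • P (Real.pi / (2 * (n : ℝ))))
    (hH : H = μ • R (Real.pi / (2 * (n : ℝ))))
    (A : ℕ → Matrix (Fin 2) (Fin 2) ℝ) (hA : ∀ k, A k = G ∨ A k = H) :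
    (∀ k : ℕ, 1 ≤ k → opNorm (prods A k) ≤ μ ^ k * opNorm (P (Real.pi / (2 * (n : ℝ))))) ∧
      Filter.Tendsto (fun k => opNorm (prods A k)) Filter.atTop (nhds 0) := by
  set φ : ℝ := π / (2 * (n:ℝ)) with hφ
  have hn0 : (0:ℝ) < n := by exact_mod_cast hn
  have hφpos : 0 < φ := by positivity
  have hn1 : (1:ℝ) ≤ n := by exact_mod_cast hn
  have hφlt : φ < π := by
    rw [hφ, div_lt_iff₀ (by positivity)]
    nlinarith [pi_pos, hn1]
  have ht0 : 0 < t := ht ▸ Real.sin_pos_of_pos_of_lt_pi hφpos hφlt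
  have ht1 : t ≤ 1 := ht ▸ Real.sin_le_one φ
  have ht4 : 0 < t ^ 4 := by positivity
  have ht41 : t ^ 4 ≤ 1 := pow_le_one₀ ht0.le ht1
  have hμ0 : 0 ≤ μ := by rw [hμ]; linarith
  have hμ1 : μ < 1 := by rw [hμ]; linarith
  have hA' : ∀ k, A k = μ • P φ ∨ A k = μ • Rot (2 * φ) := by
    intro k
    rcases hA k with h | h
    · left; rw [h, hG]
    · right; rw [h, hH, R_eq_Rot]
  have hbd := bound_all n hn μ hμ0 A hA'
  constructor
  · exact fun k _ => hbd k
  · apply squeeze_zero' (Filter.Eventually.of_forall fun k => opNorm_nonneg _)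
      (Filter.Eventually.of_forall hbd)
    have := (tendsto_pow_atTop_nhds_zero_of_lt_one hμ0 hμ1).mul_const (opNorm (P φ))
    simpa using this
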